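/- Let k_0, k_1, …, k_m be positive reals, 0 < q < 1, and let (x_n) be the multigeometric sequence (k_0 q, k_1 q, …, k_m q, k_0 q², k_1 q², …, k_m q², k_0 q³, …). Assume the achievement set E(x_n) has nonempty interior. Fix k ∈ ℕ and suppose the map from {0,1}^{(m+1)(k+1)} to ℝ sending (ε_{j,i})_{0≤j≤k, 0≤i≤m} to ∑_{j=0}^{k} q^j ∑_{i=0}^{m} ε_{j,i} k_i is not injective (i.e., some element of Σ + Σq + … + Σq^k has two distinct 0–1 representations, where Σ = {∑_{i=0}^m ε_i k_i : ε_i ∈ {0,1}}). Then the uniqueness set U(x_n) is nowhere dense. -/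

import Mathlib

open Set Topology
set_option maxHeartbeats 1000000

noncomputable section

/-- The achievement set (set of subsums) of a series `∑ xₙ`. -/
def achSet (x : ℕ → ℝ) : Set ℝ := {t : ℝ | ∃ A : Set ℕ, t = ∑' n : A, x n}

/-- The uniqueness set: points having exactly one representation as a subsum. -/
def uniqSet (x : ℕ → ℝ) : Set ℝ := {t : ℝ | ∃! A : Set ℕ, t = ∑' n : A, x n}

private lemma tsum_subset_le' {f : ℕ → ℝ} (hf : Summable f) (h0 : ∀ n, 0 ≤ f n)
    {A C : Set ℕ} (hAC : A ⊆ C) : ∑' n : A, f n ≤ ∑' n : C, f n :=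
  Summable.tsum_le_tsum_of_inj (Set.inclusion hAC) (Set.inclusion_injective hAC)
    (fun c _ => h0 c) (fun _ => le_rfl) (hf.subtype A) (hf.subtype C)

private lemma aux_summable {m : ℕ} {K : Fin (m + 1) → ℝ} {q : ℝ} {x : ℕ → ℝ}
    (hK : ∀ i, 0 < K i) (hq0 : 0 < q) (hq1 : q < 1)
    (hx : ∀ n : ℕ, x n = K ⟨n % (m + 1), Nat.mod_lt n (Nat.succ_pos m)⟩ * q ^ (n / (m + 1) + 1)) :
    Summable x := by
  have h1 : Summable (fun j : ℕ => q ^ (j+1)) := by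
    simpa [pow_succ] using (summable_geometric_of_lt_one hq0.le hq1).mul_right q
  have h2 : Summable (fun i : Fin (m+1) => K i) := Summable.of_finite
  have hg : Summable (fun z : ℕ × Fin (m+1) => q ^ (z.1 + 1) * K z.2) :=
    Summable.mul_of_nonneg h1 h2 (fun j => by positivity) (fun i => (hK i).le)
  have h3 := (Nat.divModEquiv (m+1)).summable_iff.mpr hg
  refine Summable.congr h3 (fun n => ?_)
  have hfin : ((Nat.divModEquiv (m+1)) n).2
      = (⟨n % (m + 1), Nat.mod_lt n (Nat.succ_pos m)⟩ : Fin (m+1)) := by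
    apply Fin.ext
    simp [Nat.divModEquiv, Fin.val_natCast]
  show q ^ (((Nat.divModEquiv (m+1)) n).1 + 1) * K ((Nat.divModEquiv (m+1)) n).2 = x n
  have hfst : ((Nat.divModEquiv (m+1)) n).1 = n / (m+1) := rfl
  rw [hfin, hfst, hx n, mul_comm]

private lemma aux_shift {m : ℕ} {K : Fin (m + 1) → ℝ} {q : ℝ} {x : ℕ → ℝ}
    (hx : ∀ n : ℕ, x n = K ⟨n % (m + 1), Nat.mod_lt n (Nat.succ_pos m)⟩ * q ^ (n / (m + 1) + 1))
    (A : Set ℕ) (c : ℕ) :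
    ∑' n : ((fun n => n + c * (m+1)) '' A), x n = q ^ c * ∑' n : A, x n := by
  rw [tsum_image x (Function.Injective.injOn (add_left_injective _))]
  rw [← tsum_mul_left]
  congr 1; funext n
  rw [hx, hx]
  have h1 : (↑n + c * (m+1)) % (m+1) = ↑n % (m+1) := Nat.add_mul_mod_self_right _ _ _
  have h2 : (↑n + c * (m+1)) / (m+1) = ↑n / (m+1) + c := Nat.add_mul_div_right _ _ (Nat.succ_pos m)
  have h3 : K ⟨(↑n + c * (m+1)) % (m+1), Nat.mod_lt _ (Nat.succ_pos m)⟩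
      = K ⟨↑n % (m+1), Nat.mod_lt _ (Nat.succ_pos m)⟩ := by congr 1; exact Fin.ext h1
  rw [h3, h2]
  ring

private lemma aux_window {m : ℕ} {K : Fin (m + 1) → ℝ} {q : ℝ} {x : ℕ → ℝ}
    (hx : ∀ n : ℕ, x n = K ⟨n % (m + 1), Nat.mod_lt n (Nat.succ_pos m)⟩ * q ^ (n / (m + 1) + 1))
    (k B : ℕ) (ε : Fin (k+1) → Fin (m+1) → Bool) :
    ∑' n : ((fun z : Fin (k+1) × Fin (m+1) => (B + (z.1:ℕ)) * (m+1) + (z.2:ℕ)) ''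
        {z | ε z.1 z.2 = true}), x n
      = q ^ (B+1) * ∑ j : Fin (k + 1), q ^ (j : ℕ) *
          ∑ i : Fin (m + 1), if ε j i then K i else 0 := by
  set φ : Fin (k+1) × Fin (m+1) → ℕ := fun z => (B + (z.1:ℕ)) * (m+1) + (z.2:ℕ) with hφ
  have hmod : ∀ z, φ z % (m+1) = (z.2 : ℕ) := by
    intro z
    show ((B + (z.1:ℕ)) * (m+1) + (z.2:ℕ)) % (m+1) = (z.2:ℕ)
    rw [mul_comm (B + (z.1:ℕ)) (m+1), Nat.mul_add_mod]
    exact Nat.mod_eq_of_lt z.2.isLt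
  have hdiv : ∀ z, φ z / (m+1) = B + (z.1:ℕ) := by
    intro z
    show ((B + (z.1:ℕ)) * (m+1) + (z.2:ℕ)) / (m+1) = B + (z.1:ℕ)
    rw [mul_comm (B + (z.1:ℕ)) (m+1), Nat.mul_add_div (Nat.succ_pos m),
      Nat.div_eq_of_lt z.2.isLt, add_zero]
  have hinj : Function.Injective φ := by
    intro z w h
    have h1 : (z.2 : ℕ) = (w.2 : ℕ) := by rw [← hmod z, ← hmod w, h]
    have h2 : (z.1 : ℕ) = (w.1 : ℕ) := by
      have := congrArg (· / (m+1)) h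
      simp only [hdiv] at this
      omega
    exact Prod.ext (Fin.ext h2) (Fin.ext h1)
  have hxφ : ∀ z : Fin (k+1) × Fin (m+1), x (φ z) = K z.2 * q ^ (B + (z.1:ℕ) + 1) := by
    intro z
    rw [hx (φ z)]
    congr 2
    · exact Fin.ext (hmod z)
    · rw [hdiv z]
  rw [tsum_image x hinj.injOn]
  have hc : ∀ z : {z : Fin (k+1) × Fin (m+1) | ε z.1 z.2 = true},
      x (φ z) = K (z:Fin (k+1) × Fin (m+1)).2 * q ^ (B + ((z:Fin (k+1) × Fin (m+1)).1 :ℕ) + 1) :=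
    fun z => hxφ z
  rw [tsum_congr hc]
  have step : ∑' (b : {z : Fin (k+1) × Fin (m+1) | ε z.1 z.2 = true}),
        K (b:Fin (k+1) × Fin (m+1)).2 * q ^ (B + ((b:Fin (k+1) × Fin (m+1)).1:ℕ) + 1)
      = ∑ z : Fin (k+1) × Fin (m+1),
          Set.indicator {z : Fin (k+1) × Fin (m+1) | ε z.1 z.2 = true}
            (fun z => K z.2 * q ^ (B + (z.1:ℕ) + 1)) z := by
    rw [← tsum_fintype (L := SummationFilter.unconditional _)]
    exact tsum_subtype _ (fun z : Fin (k+1) × Fin (m+1) => K z.2 * q ^ (B + (z.1:ℕ) + 1))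
  rw [step, Fintype.sum_prod_type, Finset.mul_sum]
  refine Finset.sum_congr rfl fun j _ => ?_
  rw [Finset.mul_sum, Finset.mul_sum]
  refine Finset.sum_congr rfl fun i _ => ?_
  rw [Set.indicator_apply]
  simp only [Set.mem_setOf_eq]
  split_ifs with h
  · rw [pow_add, pow_add]; ring
  · ring


private lemma aux_phi_inj {m k B : ℕ} :
    Function.Injective (fun z : Fin (k+1) × Fin (m+1) => (B + (z.1:ℕ)) * (m+1) + (z.2:ℕ)) := by
  intro z w h
  simp only at h
  have hmod : ∀ u : Fin (k+1) × Fin (m+1),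
      ((B + (u.1:ℕ)) * (m+1) + (u.2:ℕ)) % (m+1) = (u.2:ℕ) := by
    intro u
    rw [mul_comm (B + (u.1:ℕ)) (m+1), Nat.mul_add_mod]
    exact Nat.mod_eq_of_lt u.2.isLt
  have hdiv : ∀ u : Fin (k+1) × Fin (m+1),
      ((B + (u.1:ℕ)) * (m+1) + (u.2:ℕ)) / (m+1) = B + (u.1:ℕ) := by
    intro u
    rw [mul_comm (B + (u.1:ℕ)) (m+1), Nat.mul_add_div (Nat.succ_pos m),
      Nat.div_eq_of_lt u.2.isLt, add_zero]
  have h1 : (z.2 : ℕ) = (w.2 : ℕ) := by rw [← hmod z, ← hmod w, h]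
  have h2 : (z.1 : ℕ) = (w.1 : ℕ) := by
    have h3 := congrArg (· / (m+1)) h
    simp only [hdiv z, hdiv w] at h3
    omega
  exact Prod.ext (Fin.ext h2) (Fin.ext h1)

set_option maxHeartbeats 1000000 in
theorem uniqSet_nowhereDense_of_multigeometric
    (m : ℕ) (K : Fin (m + 1) → ℝ) (hK : ∀ i, 0 < K i)
    (q : ℝ) (hq0 : 0 < q) (hq1 : q < 1)
    (x : ℕ → ℝ)
    (hx : ∀ n : ℕ, x n = K ⟨n % (m + 1), Nat.mod_lt n (Nat.succ_pos m)⟩ * q ^ (n / (m + 1) + 1))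
    (hint : (interior (achSet x)).Nonempty)
    (k : ℕ)
    (hnoninj : ¬ Function.Injective (fun ε : Fin (k + 1) → Fin (m + 1) → Bool =>
      ∑ j : Fin (k + 1), q ^ (j : ℕ) * ∑ i : Fin (m + 1), if ε j i then K i else 0)) :
    IsNowhereDense (uniqSet x) := by
  classical
  have hsum : Summable x := aux_summable hK hq0 hq1 hx
  have h0 : ∀ n, 0 ≤ x n := fun n => by
    rw [hx n]; exact mul_nonneg (hK _).le (pow_nonneg hq0.le _)
  set T := ∑' n, x n with hTdef
  have hT0 : 0 ≤ T := tsum_nonneg h0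
  have hsuble : ∀ {A C : Set ℕ}, A ⊆ C → ∑' n : A, x n ≤ ∑' n : C, x n :=
    fun hAC => tsum_subset_le' hsum h0 hAC
  have htail : ∀ B : ℕ, ∑' n : ({n : ℕ | B * (m+1) ≤ n} : Set ℕ), x n = q ^ B * T := by
    intro B
    have hset : ({n : ℕ | B * (m+1) ≤ n} : Set ℕ) = (fun n => n + B * (m+1)) '' Set.univ := by
      ext n
      simp only [Set.mem_setOf_eq, Set.image_univ, Set.mem_range]
      constructor
      · intro h; exact ⟨n - B*(m+1), by omega⟩
      · rintro ⟨a, rfl⟩; omega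
    rw [hset, aux_shift hx Set.univ B, tsum_univ]
  have hachm : ∀ e ∈ achSet x, 0 ≤ e ∧ e ≤ T := by
    rintro e ⟨Ae, rfl⟩
    refine ⟨tsum_nonneg (fun n => h0 n), ?_⟩
    calc ∑' n : Ae, x n ≤ ∑' n : (Set.univ : Set ℕ), x n := hsuble (Set.subset_univ _)
    _ = T := tsum_univ x
  rw [Function.not_injective_iff] at hnoninj
  obtain ⟨ε₁, ε₂, hVeq, hεne⟩ := hnoninj
  have hVeq' : (∑ j : Fin (k + 1), q ^ (j : ℕ) * ∑ i : Fin (m + 1), if ε₁ j i then K i else 0)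
      = (∑ j : Fin (k + 1), q ^ (j : ℕ) * ∑ i : Fin (m + 1), if ε₂ j i then K i else 0) := hVeq
  show interior (closure (uniqSet x)) = ∅
  rw [← Set.not_nonempty_iff_eq_empty]
  rintro ⟨t₀, ht₀⟩
  obtain ⟨r, hr0, hball⟩ := Metric.isOpen_iff.mp isOpen_interior t₀ ht₀
  have hballU : Metric.ball t₀ r ⊆ closure (uniqSet x) := hball.trans interior_subset
  obtain ⟨u, huU, hdu⟩ := Metric.mem_closure_iff.mp (hballU (Metric.mem_ball_self hr0))
    (r/2) (by positivity)
  obtain ⟨A, hA, hAuniq⟩ := huU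
  obtain ⟨e₀, he₀⟩ := hint
  obtain ⟨r₁, hr₁0, hball₁⟩ := Metric.isOpen_iff.mp isOpen_interior e₀ he₀
  have hball₁E : Metric.ball e₀ r₁ ⊆ achSet x := hball₁.trans interior_subset
  obtain ⟨he₀0, he₀T⟩ := hachm e₀ (hball₁E (Metric.mem_ball_self hr₁0))
  have hD0 : (0:ℝ) < 3*T + r₁ + 1 := by positivity
  obtain ⟨B, hB⟩ := exists_pow_lt_of_lt_one (show (0:ℝ) < (r/2)/(3*T + r₁ + 1) by positivity) hq1
  have hqB : q ^ B * (3*T + r₁) < r/2 := by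
    have h1 := (lt_div_iff₀ hD0).mp hB
    nlinarith [pow_nonneg hq0.le B]
  set M₁ := B * (m+1) with hM₁
  set M₂ := (B+k+1) * (m+1) with hM₂
  have hM₁₂ : M₁ ≤ M₂ := Nat.mul_le_mul_right _ (by omega)
  set A₁ := A ∩ Set.Iio M₁ with hA₁
  set Atail := A ∩ {n | M₁ ≤ n} with hAtail
  set c := ∑' n : A₁, x n with hc
  set tA := ∑' n : Atail, x n with htAdef
  have hAsplit : A = A₁ ∪ Atail := by
    ext n
    simp only [hA₁, hAtail, Set.mem_union, Set.mem_inter_iff, Set.mem_Iio, Set.mem_setOf_eq]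
    constructor
    · intro hn
      rcases lt_or_ge n M₁ with h | h
      · exact Or.inl ⟨hn, h⟩
      · exact Or.inr ⟨hn, h⟩
    · rintro (⟨h, _⟩ | ⟨h, _⟩) <;> exact h
  have hdisj0 : Disjoint A₁ Atail := by
    rw [Set.disjoint_left]
    rintro n ⟨_, h1⟩ ⟨_, h2⟩
    simp only [Set.mem_Iio] at h1
    simp only [Set.mem_setOf_eq] at h2
    omega
  have hu : u = c + tA := by
    rw [hA, hAsplit]
    exact Summable.tsum_union_disjoint hdisj0 (hsum.subtype _) (hsum.subtype _)
  have htA_le : tA ≤ q ^ B * T := by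
    rw [htAdef, ← htail B]
    exact hsuble (fun n hn => hn.2)
  have htA0 : 0 ≤ tA := tsum_nonneg (fun n => h0 n)
  set W₁ : Set ℕ := (fun z : Fin (k+1) × Fin (m+1) => (B + (z.1:ℕ)) * (m+1) + (z.2:ℕ)) ''
    {z | ε₁ z.1 z.2 = true} with hW₁
  set W₂ : Set ℕ := (fun z : Fin (k+1) × Fin (m+1) => (B + (z.1:ℕ)) * (m+1) + (z.2:ℕ)) ''
    {z | ε₂ z.1 z.2 = true} with hW₂
  set w := ∑' n : W₁, x n with hwdef
  have hw1 : w = q ^ (B+1) * (∑ j : Fin (k + 1), q ^ (j : ℕ) *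
      ∑ i : Fin (m + 1), if ε₁ j i then K i else 0) := aux_window hx k B ε₁
  have hw2 : ∑' n : W₂, x n = w := by
    rw [hW₂, aux_window hx k B ε₂, hw1, hVeq']
  have hWsub : ∀ (ε : Fin (k+1) → Fin (m+1) → Bool) (n : ℕ),
      n ∈ ((fun z : Fin (k+1) × Fin (m+1) => (B + (z.1:ℕ)) * (m+1) + (z.2:ℕ)) ''
        {z | ε z.1 z.2 = true}) → M₁ ≤ n ∧ n < M₂ := by
    rintro ε n ⟨z, _, rfl⟩
    have hz1 : (z.1:ℕ) ≤ k := Nat.lt_succ_iff.mp z.1.isLt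
    have hz2 : (z.2:ℕ) < m+1 := z.2.isLt
    constructor
    · calc M₁ = B * (m+1) := hM₁
      _ ≤ (B + (z.1:ℕ)) * (m+1) := Nat.mul_le_mul_right _ (Nat.le_add_right _ _)
      _ ≤ (B + (z.1:ℕ)) * (m+1) + (z.2:ℕ) := Nat.le_add_right _ _
    · calc (B + (z.1:ℕ)) * (m+1) + (z.2:ℕ) < (B + (z.1:ℕ) + 1) * (m+1) := by rw [Nat.succ_mul]; exact Nat.add_lt_add_left hz2 _
      _ ≤ (B+k+1) * (m+1) := Nat.mul_le_mul_right _ (by omega)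
      _ = M₂ := hM₂.symm
  have hw0 : 0 ≤ w := tsum_nonneg (fun n => h0 n)
  have hw_le : w ≤ q ^ B * T := by
    rw [hwdef, ← htail B]
    exact hsuble (fun n hn => (hWsub ε₁ n hn).1)
  set Q := q ^ (B+k+1) with hQ
  have hQ0 : 0 < Q := pow_pos hq0 _
  have hQle : Q ≤ q ^ B := by
    rw [hQ]
    calc q ^ (B+k+1) = q ^ B * q ^ (k+1) := by rw [← pow_add, add_assoc]
    _ ≤ q ^ B * 1 := by
        apply mul_le_mul_of_nonneg_left _ (pow_nonneg hq0.le _)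
        exact pow_le_one₀ hq0.le hq1.le
    _ = q ^ B := mul_one _
  set z₀ := c + w + Q * e₀ with hz₀
  have hQe₀ : Q * e₀ ≤ q ^ B * T := by
    calc Q * e₀ ≤ q ^ B * e₀ := mul_le_mul_of_nonneg_right hQle he₀0
    _ ≤ q ^ B * T := mul_le_mul_of_nonneg_left he₀T (pow_nonneg hq0.le _)
  have hQe₀0 : 0 ≤ Q * e₀ := mul_nonneg hQ0.le he₀0
  have hz₀u : |u - z₀| ≤ 2 * (q ^ B * T) := by
    rw [hu, hz₀, abs_le]
    constructor <;> linarith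
  have hz₀ball : z₀ ∈ Metric.ball t₀ r := by
    rw [Metric.mem_ball]
    have hd1 : dist z₀ u ≤ 2 * (q ^ B * T) := by
      rw [dist_comm, Real.dist_eq]; exact hz₀u
    have hut : dist u t₀ < r/2 := by rw [dist_comm]; exact hdu
    calc dist z₀ t₀ ≤ dist z₀ u + dist u t₀ := dist_triangle _ _ _
    _ < 2*(q ^ B * T) + r/2 := by linarith
    _ ≤ r := by nlinarith [mul_nonneg (pow_nonneg hq0.le B) hT0,
        mul_nonneg (pow_nonneg hq0.le B) hr₁0.le]
  have hclaim : ∀ y : ℝ, dist y z₀ < Q * r₁ → y ∉ uniqSet x := by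
    intro y hy hyU
    set e := (y - c - w) / Q with he
    have hye : y = c + w + Q * e := by
      rw [he]; field_simp; ring
    have heball : e ∈ Metric.ball e₀ r₁ := by
      rw [Metric.mem_ball, Real.dist_eq]
      have hee : e - e₀ = (y - z₀) / Q := by
        rw [he, hz₀]; field_simp; ring
      rw [hee, abs_div, abs_of_pos hQ0, div_lt_iff₀ hQ0]
      calc |y - z₀| < Q * r₁ := by rw [← Real.dist_eq]; exact hy
      _ = r₁ * Q := mul_comm _ _
    obtain ⟨Ae, hAe⟩ := hball₁E heball
    set Sh := (fun n => n + (B+k+1) * (m+1)) '' Ae with hSh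
    have hShsub : ∀ n ∈ Sh, M₂ ≤ n := by
      rintro n ⟨a, _, rfl⟩
      rw [hM₂]
      exact Nat.le_add_left _ _
    have hsum_rep : ∀ (W : Set ℕ), (∀ n ∈ W, M₁ ≤ n ∧ n < M₂) →
        ∑' n : ((A₁ ∪ W) ∪ Sh : Set ℕ), x n = c + (∑' n : W, x n) + Q * e := by
      intro W hW
      have hd1 : Disjoint A₁ W := by
        rw [Set.disjoint_left]
        rintro n ⟨_, hn1⟩ hn2
        have h1 := (hW n hn2).1
        simp only [Set.mem_Iio] at hn1
        omega
      have hd2 : Disjoint (A₁ ∪ W) Sh := by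
        rw [Set.disjoint_left]
        rintro n (⟨_, hn1⟩ | hn2) hn3
        · have h1 := hShsub n hn3
          simp only [Set.mem_Iio] at hn1
          omega
        · have h1 := hShsub n hn3
          have h2 := (hW n hn2).2
          omega
      rw [Summable.tsum_union_disjoint hd2 (hsum.subtype _) (hsum.subtype _),
        Summable.tsum_union_disjoint hd1 (hsum.subtype _) (hsum.subtype _)]
      have hShsum : ∑' n : Sh, x n = Q * e := by
        rw [hSh, aux_shift hx Ae (B+k+1), ← hAe, hQ]
      rw [hShsum, hc]
    have hrep1 : y = ∑' n : ((A₁ ∪ W₁) ∪ Sh : Set ℕ), x n := by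
      rw [hsum_rep W₁ (hWsub ε₁), ← hwdef]
      exact hye
    have hrep2 : y = ∑' n : ((A₁ ∪ W₂) ∪ Sh : Set ℕ), x n := by
      rw [hsum_rep W₂ (hWsub ε₂), hw2]
      exact hye
    obtain ⟨j, hj⟩ := Function.ne_iff.mp hεne
    obtain ⟨i, hi⟩ := Function.ne_iff.mp hj
    set n₀ := (B + (j:ℕ)) * (m+1) + (i:ℕ) with hn₀
    have hn₀b : M₁ ≤ n₀ ∧ n₀ < M₂ :=
      hWsub (fun _ _ => true) n₀ ⟨(j, i), rfl, hn₀.symm⟩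
    have hn₀mem : ∀ (ε : Fin (k+1) → Fin (m+1) → Bool),
        (n₀ ∈ ((fun z : Fin (k+1) × Fin (m+1) => (B + (z.1:ℕ)) * (m+1) + (z.2:ℕ)) ''
          {z | ε z.1 z.2 = true})) ↔ ε j i = true := by
      intro ε
      constructor
      · rintro ⟨z, hz, hzeq⟩
        have hzji : z = (j, i) := aux_phi_inj (hzeq.trans hn₀)
        rw [hzji] at hz
        exact hz
      · intro h
        exact ⟨(j, i), h, hn₀.symm⟩
    have hmem1 : (n₀ ∈ ((A₁ ∪ W₁) ∪ Sh : Set ℕ)) ↔ ε₁ j i = true := by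
      simp only [Set.mem_union]
      constructor
      · rintro ((⟨_, h⟩ | h) | h)
        · exfalso; simp only [Set.mem_Iio] at h; omega
        · exact (hn₀mem ε₁).mp h
        · exfalso; have := hShsub n₀ h; omega
      · intro h; exact Or.inl (Or.inr ((hn₀mem ε₁).mpr h))
    have hmem2 : (n₀ ∈ ((A₁ ∪ W₂) ∪ Sh : Set ℕ)) ↔ ε₂ j i = true := by
      simp only [Set.mem_union]
      constructor
      · rintro ((⟨_, h⟩ | h) | h)
        · exfalso; simp only [Set.mem_Iio] at h; omega
        · exact (hn₀mem ε₂).mp h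
        · exfalso; have := hShsub n₀ h; omega
      · intro h; exact Or.inl (Or.inr ((hn₀mem ε₂).mpr h))
    have hRne : ((A₁ ∪ W₁) ∪ Sh : Set ℕ) ≠ ((A₁ ∪ W₂) ∪ Sh) := by
      intro hEq
      rw [hEq] at hmem1
      exact hi (Bool.eq_iff_iff.mpr (hmem1.symm.trans hmem2))
    obtain ⟨S, hS, hSuniq⟩ := hyU
    exact hRne ((hSuniq _ hrep1).trans (hSuniq _ hrep2).symm)
  have hz₀cl : z₀ ∈ closure (uniqSet x) := hballU hz₀ball
  obtain ⟨y, hyU, hyd⟩ := Metric.mem_closure_iff.mp hz₀cl (Q * r₁) (by positivity)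
  exact hclaim y (by rw [dist_comm]; exact hyd) hyU
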